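/- A box world state on S/I extends uniquely to a family of probability valuations on the measurement logics forming a 'cone': given a box world state p on S/I, there is a unique family (P_c)_{c ∈ C_{S/I}} where P_c is a probability valuation on the Boolean algebra 2^{2^c}, such that P_c(A) = Σ_{x ∈ A} p(x) for maximal c, and P_{c'} = P_c ∘ r_{c',c} for all c' ≤ c, where r_{c',c} : 2^{2^{c'}} → 2^{2^c} is the Boolean homomorphism induced by the restriction map 2^c → 2^{c'}. -/
import Mathlib


variable {S I : Type} [Fintype S] [DecidableEq S] [Fintype I]

/-- A context of the box presentation `π : S → I`: a subset of `S` on which `π` is injective. -/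
def IsCtx (π : S → I) (c : Finset S) : Prop := Set.InjOn π ↑c

/-- A maximal context. -/
def IsMaxCtx (π : S → I) (c : Finset S) : Prop :=
  IsCtx π c ∧ ∀ d : Finset S, IsCtx π d → c ⊆ d → d = c

/-- Outcomes in context `c`: functions `c → {0,1}`, encoded as boolean functions on `S`
vanishing outside `c`. -/
def Out (c : Finset S) : Type := { x : S → Bool // ∀ s, s ∉ c → x s = false }

instance (c : Finset S) : Fintype (Out c) := Subtype.fintype _
instance (c : Finset S) : DecidableEq (Out c) := Subtype.instDecidableEq

/-- Restriction of an outcome to a (smaller) context. -/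
def res {c : Finset S} (c' : Finset S) (x : Out c) : Out (c' : Finset S) :=
  ⟨fun s => if s ∈ c' then x.1 s else false, fun s hs => if_neg hs⟩

/-- A box world state: a `[0,1]`-valued map on outcomes over maximal contexts which is
normalised and non-signalling. (Values at non-maximal contexts are unconstrained.) -/
def IsBoxState (π : S → I) (p : ∀ c : Finset S, Out c → ℝ) : Prop :=
  (∀ c : Finset S, IsMaxCtx π c → ∀ x : Out c, 0 ≤ p c x ∧ p c x ≤ 1) ∧
  (∀ c : Finset S, IsMaxCtx π c → ∑ x : Out c, p c x = 1) ∧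
  (∀ c : Finset S, IsCtx π c → ∀ d d' : Finset S, IsMaxCtx π d → IsMaxCtx π d' →
    c ⊆ d → c ⊆ d' → ∀ x : Out c,
      ∑ y ∈ Finset.univ.filter (fun y : Out d => res c y = x), p d y =
      ∑ y ∈ Finset.univ.filter (fun y : Out d' => res c y = x), p d' y)

lemma exists_maxCtx_ext (π : S → I) {c : Finset S} (hc : IsCtx π c) :
    ∃ d : Finset S, IsMaxCtx π d ∧ c ⊆ d := by
  classical
  obtain ⟨d, hd, hmax⟩ := Finset.exists_max_image
    ((Finset.univ : Finset (Finset S)).filter fun d => IsCtx π d ∧ c ⊆ d) Finset.card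
    ⟨c, by simp [hc]⟩
  simp only [Finset.mem_filter, Finset.mem_univ, true_and] at hd
  refine ⟨d, ⟨hd.1, ?_⟩, hd.2⟩
  intro e he hde
  have := hmax e (by simp [he, hd.2.trans hde])
  exact (Finset.eq_of_subset_of_card_le hde this).symm

lemma res_res {d : Finset S} (c' c : Finset S) (h : c' ⊆ c) (z : Out d) :
    res c' (res c z) = res c' z := by
  apply Subtype.ext; funext s
  simp only [res]
  by_cases hs : s ∈ c'
  · simp [hs, h hs]
  · simp [hs]

lemma res_self {c : Finset S} (z : Out c) : res c z = z := by
  apply Subtype.ext; funext s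
  by_cases hs : s ∈ c
  · simp [res, hs]
  · simp [res, hs, z.2 s hs]

lemma sum_filter_mem {c d : Finset S} (A : Finset (Out c)) (f : Out d → ℝ) :
    ∑ y ∈ Finset.univ.filter (fun y : Out d => res c y ∈ A), f y
      = ∑ x ∈ A, ∑ y ∈ Finset.univ.filter (fun y : Out d => res c y = x), f y := by
  classical
  rw [← Finset.sum_fiberwise_of_maps_to (g := fun y : Out d => res c y)
    (fun y hy => (Finset.mem_filter.mp hy).2) f]
  refine Finset.sum_congr rfl fun x hx => Finset.sum_congr ?_ fun _ _ => rfl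
  ext y
  simp only [Finset.mem_filter, Finset.mem_univ, true_and]
  constructor
  · rintro ⟨_, h2⟩; exact h2
  · intro h; exact ⟨h ▸ hx, h⟩

lemma sum_ext_eq (π : S → I) (p : ∀ c : Finset S, Out c → ℝ) (hp : IsBoxState π p)
    {c d d' : Finset S} (hc : IsCtx π c)
    (hd : IsMaxCtx π d) (hd' : IsMaxCtx π d') (h1 : c ⊆ d) (h2 : c ⊆ d')
    (A : Finset (Out c)) :
    ∑ y ∈ Finset.univ.filter (fun y : Out d => res c y ∈ A), p d y
      = ∑ y ∈ Finset.univ.filter (fun y : Out d' => res c y ∈ A), p d' y := by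
  rw [sum_filter_mem, sum_filter_mem]
  exact Finset.sum_congr rfl fun x _ => hp.2.2 c hc d d' hd hd' h1 h2 x

/-- A box world state on `S/I` extends uniquely to a cone of
probability valuations on the measurement logics: given a box world state `p`,
there is a unique family `(P_c)` of probability valuations on the Boolean
algebras `2^{2^c}` of subsets of outcomes, such that `P_c A = ∑_{x ∈ A} p x`
for maximal `c`, and `P_{c'} = P_c ∘ r_{c',c}` for all `c' ≤ c`, where
`r_{c',c}` is the Boolean homomorphism induced by restriction of outcomes. -/
theorem boxState_extends_to_valuation_cone (π : S → I)
    (p : ∀ c : Finset S, Out c → ℝ) (hp : IsBoxState π p)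
    (hp01 : ∀ c : Finset S, IsMaxCtx π c → ∀ x : Out c, 0 ≤ p c x ∧ p c x ≤ 1) :
    ∃! P : ∀ c : {c : Finset S // IsCtx π c}, Finset (Out c.1) → ℝ,
      -- each `P c` is a probability valuation on the Boolean algebra `2^{2^c}`
      (∀ c : {c : Finset S // IsCtx π c},
        (∀ A : Finset (Out c.1), 0 ≤ P c A ∧ P c A ≤ 1) ∧
        (∀ A B : Finset (Out c.1), A ⊆ B → P c A ≤ P c B) ∧
        P c ∅ = 0 ∧ P c Finset.univ = 1 ∧
        (∀ A B : Finset (Out c.1), P c (A ∪ B) + P c (A ∩ B) = P c A + P c B)) ∧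
      -- on maximal contexts, `P_c` is given by summing `p`
      (∀ c : {c : Finset S // IsCtx π c}, IsMaxCtx π c.1 →
        ∀ A : Finset (Out c.1), P c A = ∑ x ∈ A, p c.1 x) ∧
      -- the cone condition: `P_{c'} = P_c ∘ r_{c',c}` for `c' ≤ c`
      (∀ c' c : {c : Finset S // IsCtx π c}, c'.1 ⊆ c.1 →
        ∀ A : Finset (Out c'.1),
          P c' A = P c (Finset.univ.filter (fun y : Out c.1 => res c'.1 y ∈ A))) := by
  classical
  choose m hm hsub using fun c : {c : Finset S // IsCtx π c} => exists_maxCtx_ext π c.2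
  set P : ∀ c : {c : Finset S // IsCtx π c}, Finset (Out c.1) → ℝ :=
    fun c A => ∑ y ∈ Finset.univ.filter (fun y : Out (m c) => res c.1 y ∈ A), p (m c) y
    with hP
  -- P c A equals the corresponding sum over any maximal extension
  have key : ∀ c : {c : Finset S // IsCtx π c}, ∀ d : Finset S, IsMaxCtx π d → c.1 ⊆ d →
      ∀ A : Finset (Out c.1),
        P c A = ∑ y ∈ Finset.univ.filter (fun y : Out d => res c.1 y ∈ A), p d y :=
    fun c d hd hcd A => sum_ext_eq π p hp c.2 (hm c) hd (hsub c) hcd A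
  have nonneg : ∀ c A, 0 ≤ P c A := fun c A =>
    Finset.sum_nonneg fun y _ => (hp01 (m c) (hm c) y).1
  have mono : ∀ c, ∀ A B : Finset (Out c.1), A ⊆ B → P c A ≤ P c B := by
    intro c A B hAB
    refine Finset.sum_le_sum_of_subset_of_nonneg ?_ fun y _ _ => (hp01 (m c) (hm c) y).1
    intro y hy
    simp only [Finset.mem_filter, Finset.mem_univ, true_and] at *
    exact hAB hy
  have huniv : ∀ c, P c Finset.univ = 1 := by
    intro c
    have : Finset.univ.filter (fun y : Out (m c) => res c.1 y ∈ (Finset.univ : Finset (Out c.1)))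
        = Finset.univ := by
      apply Finset.filter_true_of_mem; intro y _; exact Finset.mem_univ _
    rw [hP]; simp only []
    rw [this]; exact hp.2.1 (m c) (hm c)
  refine ⟨P, ⟨?_, ?_, ?_⟩, ?_⟩
  · -- valuation properties
    intro c
    refine ⟨fun A => ⟨nonneg c A, ?_⟩, mono c, ?_, huniv c, ?_⟩
    · calc P c A ≤ P c Finset.univ := mono c A Finset.univ (Finset.subset_univ A)
        _ = 1 := huniv c
    · rw [hP]; simp
    · intro A B
      rw [hP]
      simp only [Finset.mem_union, Finset.mem_inter, Finset.filter_or, Finset.filter_and]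
      exact Finset.sum_union_inter
  · -- maximal contexts
    intro c hc A
    rw [key c c.1 hc (subset_refl _) A]
    have : Finset.univ.filter (fun y : Out c.1 => res c.1 y ∈ A) = A := by
      ext y; simp [res_self]
    rw [this]
  · -- cone condition
    intro c' c hcc A
    rw [key c' (m c) (hm c) (hcc.trans (hsub c)) A, hP]
    refine Finset.sum_congr ?_ fun _ _ => rfl
    ext y
    simp only [Finset.mem_filter, Finset.mem_univ, true_and,
      res_res c'.1 c.1 hcc y]
  · -- uniqueness
    intro Q ⟨hval, hmaxQ, hconeQ⟩
    funext c
    funext A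
    have h1 := hconeQ c ⟨m c, (hm c).1⟩ (hsub c) A
    have h2 := hmaxQ ⟨m c, (hm c).1⟩ (hm c)
      (Finset.univ.filter (fun y : Out (m c) => res c.1 y ∈ A))
    rw [h1, h2, hP]
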